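/- Let Φ(t, θ, r) = (t(sin(θ+r) − sin θ)/r, t(−cos(θ+r) + cos θ)/r, t²(r − sin r)/(2r²)). Then for all t > 0, θ ∈ ℝ, and r ∈ (−2π, 2π) with r ≠ 0, the absolute value of the Jacobian determinant of Φ at (t, θ, r) equals t³ (2 − 2cos r − r sin r)/r⁴. -/

import Mathlib

open Real

noncomputable section

abbrev R3 := ℝ × ℝ × ℝ

/-- The coordinate map `Φ(t, θ, r)` on the Heisenberg group. -/
noncomputable def Phi (q : R3) : R3 :=
  (q.1 * (Real.sin (q.2.1 + q.2.2) - Real.sin q.2.1) / q.2.2,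
   q.1 * (-Real.cos (q.2.1 + q.2.2) + Real.cos q.2.1) / q.2.2,
   q.1 ^ 2 * (q.2.2 - Real.sin q.2.2) / (2 * q.2.2 ^ 2))

/-- The obvious linear identification of `Fin 3 → ℝ` with `ℝ × ℝ × ℝ`. -/
noncomputable def e3aux : (Fin 3 → ℝ) ≃ₗ[ℝ] R3 where
  toFun f := (f 0, f 1, f 2)
  invFun x := ![x.1, x.2.1, x.2.2]
  map_add' a b := rfl
  map_smul' c a := rfl
  left_inv f := by funext i; fin_cases i <;> rfl
  right_inv x := rfl

lemma det_eq_aux (f : R3 →ₗ[ℝ] R3) :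
    f.det = Matrix.det !![(f (1,0,0)).1, (f (0,1,0)).1, (f (0,0,1)).1;
                          (f (1,0,0)).2.1, (f (0,1,0)).2.1, (f (0,0,1)).2.1;
                          (f (1,0,0)).2.2, (f (0,1,0)).2.2, (f (0,0,1)).2.2] := by
  rw [← LinearMap.det_conj f e3aux.symm, ← LinearMap.det_toMatrix']
  congr 1
  ext i j
  fin_cases i <;> fin_cases j <;>
    simp [LinearMap.toMatrix'_apply, LinearEquiv.conj_apply, e3aux, Matrix.of_apply, LinearEquiv.coe_symm_mk] <;> rfl

lemma aux_nonneg (x : ℝ) (h1 : -π < x) (h2 : x < π) :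
    0 ≤ Real.sin x * (Real.sin x - x * Real.cos x) := by
  wlog hx : 0 ≤ x generalizing x
  · have h := this (-x) (by linarith) (by linarith) (by linarith)
    have e : Real.sin (-x) * (Real.sin (-x) - -x * Real.cos (-x))
        = Real.sin x * (Real.sin x - x * Real.cos x) := by
      rw [Real.sin_neg, Real.cos_neg]; ring
    linarith [e ▸ h]
  have hsin : 0 ≤ Real.sin x := Real.sin_nonneg_of_nonneg_of_le_pi hx h2.le
  rcases eq_or_lt_of_le hx with h0 | h0
  · simp [← h0]
  refine mul_nonneg hsin ?_
  rcases lt_or_ge x (π / 2) with hlt | hge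
  · have htan := Real.lt_tan h0 hlt
    have hcos : 0 < Real.cos x :=
      Real.cos_pos_of_mem_Ioo ⟨by linarith [Real.pi_pos], hlt⟩
    rw [Real.tan_eq_sin_div_cos, lt_div_iff₀ hcos] at htan
    linarith
  · have hcos : Real.cos x ≤ 0 :=
      Real.cos_nonpos_of_pi_div_two_le_of_le hge (by linarith)
    nlinarith

lemma key_nonneg (r : ℝ) (h1 : -(2 * π) < r) (h2 : r < 2 * π) :
    0 ≤ 2 - 2 * Real.cos r - r * Real.sin r := by
  have hc : Real.cos r = 2 * Real.cos (r / 2) ^ 2 - 1 := by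
    have := Real.cos_two_mul (r / 2); rwa [show 2 * (r / 2) = r by ring] at this
  have hs : Real.sin r = 2 * Real.sin (r / 2) * Real.cos (r / 2) := by
    have := Real.sin_two_mul (r / 2); rwa [show 2 * (r / 2) = r by ring] at this
  have hp := Real.sin_sq_add_cos_sq (r / 2)
  have key : 2 - 2 * Real.cos r - r * Real.sin r
      = 4 * (Real.sin (r / 2) * (Real.sin (r / 2) - r / 2 * Real.cos (r / 2))) := by
    linear_combination (-2) * hc + (-r) * hs + (-4) * hp
  rw [key]
  have := aux_nonneg (r / 2) (by linarith) (by linarith)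
  linarith

theorem stmt16 (t θ r : ℝ) (ht : 0 < t) (hr : r ∈ Set.Ioo (-(2 * π)) (2 * π)) (hr0 : r ≠ 0) :
    |(fderiv ℝ Phi (t, θ, r)).det| =
      t ^ 3 * (2 - 2 * Real.cos r - r * Real.sin r) / r ^ 4 := by
  have ht' : HasFDerivAt (fun q : R3 => q.1) (ContinuousLinearMap.fst ℝ ℝ (ℝ × ℝ)) (t, θ, r) :=
    hasFDerivAt_fst
  have hθ' : HasFDerivAt (fun q : R3 => q.2.1)
      ((ContinuousLinearMap.fst ℝ ℝ ℝ).comp (ContinuousLinearMap.snd ℝ ℝ (ℝ × ℝ))) (t, θ, r) :=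
    hasFDerivAt_fst.comp _ hasFDerivAt_snd
  have hr' : HasFDerivAt (fun q : R3 => q.2.2)
      ((ContinuousLinearMap.snd ℝ ℝ ℝ).comp (ContinuousLinearMap.snd ℝ ℝ (ℝ × ℝ))) (t, θ, r) :=
    hasFDerivAt_snd.comp _ hasFDerivAt_snd
  have hinv := (hasDerivAt_inv hr0).comp_hasFDerivAt (t, θ, r) hr'
  have h2r0 : (2 : ℝ) * (r * r) ≠ 0 := by positivity
  have hinv2 := (hasDerivAt_inv h2r0).comp_hasFDerivAt (t, θ, r) ((hr'.mul hr').const_mul 2)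
  have h1 := (ht'.mul (((hθ'.add hr').sin).sub hθ'.sin)).mul hinv
  have h2 := (ht'.mul (((hθ'.add hr').cos).neg.add hθ'.cos)).mul hinv
  have h3 := ((ht'.mul ht').mul (hr'.sub hr'.sin)).mul hinv2
  have hP : Phi = fun q : R3 =>
      ((q.1 * (Real.sin (q.2.1 + q.2.2) - Real.sin q.2.1)) * (q.2.2)⁻¹,
       (q.1 * (-Real.cos (q.2.1 + q.2.2) + Real.cos q.2.1)) * (q.2.2)⁻¹,
       (q.1 * q.1 * (q.2.2 - Real.sin q.2.2)) * (2 * (q.2.2 * q.2.2))⁻¹) := by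
    funext q; simp [Phi, div_eq_mul_inv, pow_two]
  have hD := (h1.prodMk (h2.prodMk h3)).fderiv
  simp only [Function.comp_def, Pi.mul_apply, Pi.add_apply, Pi.sub_apply, Pi.neg_apply] at hD
  rw [hP, hD, ContinuousLinearMap.det, det_eq_aux]
  simp only [ContinuousLinearMap.coe_coe, ContinuousLinearMap.prod_apply,
    ContinuousLinearMap.add_apply, ContinuousLinearMap.smul_apply,
    ContinuousLinearMap.sub_apply, ContinuousLinearMap.neg_apply,
    ContinuousLinearMap.comp_apply, ContinuousLinearMap.coe_fst',
    ContinuousLinearMap.coe_snd', smul_eq_mul]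
  rw [Matrix.det_fin_three]
  norm_num
  simp only [Matrix.cons_val_two, Matrix.tail_cons, Matrix.head_cons, Matrix.cons_val, Matrix.vecHead]
  have hnn : (0:ℝ) ≤ t ^ 3 * (2 - 2 * Real.cos r - r * Real.sin r) / r ^ 4 :=
    div_nonneg (mul_nonneg (by positivity) (key_nonneg r hr.1 hr.2)) (by positivity)
  rw [abs_eq hnn]
  left
  rw [Real.sin_add, Real.cos_add]
  have hs := Real.sin_sq_add_cos_sq θ
  have hs2 := Real.sin_sq_add_cos_sq r
  field_simp
  linear_combination (t ^ 2 * r *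
      (-Real.cos r * Real.sin r ^ 2 - 3 * Real.cos r + 3 * Real.cos r ^ 2 -
        Real.cos r ^ 3 + 3 * Real.sin r ^ 2 + 1) -
    2 * Real.sin r * t ^ 2 * r ^ 2) * hs + (t ^ 2 * r * (3 - Real.cos r)) * hs2
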